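/- Let E₁, E₂ be phase observables with phase matrices (c^{(1)}_{n,m}), (c^{(2)}_{n,m}), let 0 < λ < 1, and suppose c_{n,m} = λ c^{(1)}_{n,m} + (1−λ) c^{(2)}_{n,m} satisfies |c_{n,m}| = 1 for all n, m. Then c_{n,m} = c^{(1)}_{n,m} = c^{(2)}_{n,m} for all n, m. Consequently, any phase observable whose matrix elements all have modulus one (e.g. the canonical phase) is an extreme point of the convex set of phase observables. -/

import Mathlib

open Complex

/-- If a convex combination `c = λ c¹ + (1-λ) c²` (0 < λ < 1) of two phase matrices (entries
being inner products of unit vectors) has all entries of modulus one, then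
`c = c¹ = c²`. Hence any phase observable with all matrix elements of modulus one (e.g. the
canonical phase) is extremal in the convex set of phase observables. -/
theorem stmt17 {H : Type*} [NormedAddCommGroup H] [InnerProductSpace ℂ H]
    (ξ₁ ξ₂ : ℕ → H) (hξ₁ : ∀ n, ‖ξ₁ n‖ = 1) (hξ₂ : ∀ n, ‖ξ₂ n‖ = 1)
    (c₁ c₂ c : ℕ → ℕ → ℂ)
    (hc₁ : ∀ n m, c₁ n m = (inner ℂ (ξ₁ n) (ξ₁ m) : ℂ))
    (hc₂ : ∀ n m, c₂ n m = (inner ℂ (ξ₂ n) (ξ₂ m) : ℂ))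
    (lam : ℝ) (hlam : 0 < lam) (hlam' : lam < 1)
    (hconv : ∀ n m, c n m = (lam : ℂ) * c₁ n m + ((1 - lam : ℝ) : ℂ) * c₂ n m)
    (hmod : ∀ n m, ‖c n m‖ = 1) :
    ∀ n m, c n m = c₁ n m ∧ c n m = c₂ n m := by
  intro n m
  set z₁ := c₁ n m with hz₁
  set z₂ := c₂ n m with hz₂
  have h1 : ‖z₁‖ ≤ 1 := by
    rw [hz₁, hc₁]
    calc ‖(inner ℂ (ξ₁ n) (ξ₁ m) : ℂ)‖ ≤ ‖ξ₁ n‖ * ‖ξ₁ m‖ := norm_inner_le_norm _ _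
    _ = 1 := by rw [hξ₁, hξ₁, one_mul]
  have h2 : ‖z₂‖ ≤ 1 := by
    rw [hz₂, hc₂]
    calc ‖(inner ℂ (ξ₂ n) (ξ₂ m) : ℂ)‖ ≤ ‖ξ₂ n‖ * ‖ξ₂ m‖ := norm_inner_le_norm _ _
    _ = 1 := by rw [hξ₂, hξ₂, one_mul]
  have hμ : (0:ℝ) < 1 - lam := by linarith
  have ha : (lam:ℂ) * z₁ = lam • z₁ := by rw [real_smul]
  have hb : ((1 - lam : ℝ):ℂ) * z₂ = (1 - lam) • z₂ := by rw [real_smul]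
  have hcnm : c n m = lam • z₁ + (1 - lam) • z₂ := by rw [hconv, ha, hb]
  have hna : ‖lam • z₁‖ ≤ lam := by
    rw [norm_smul, Real.norm_of_nonneg hlam.le]
    nlinarith
  have hnb : ‖(1 - lam) • z₂‖ ≤ 1 - lam := by
    rw [norm_smul, Real.norm_of_nonneg hμ.le]
    nlinarith
  have hsum : ‖lam • z₁ + (1 - lam) • z₂‖ = 1 := by
    rw [← hcnm]; exact hmod n m
  have htri : ‖lam • z₁ + (1 - lam) • z₂‖ ≤ ‖lam • z₁‖ + ‖(1 - lam) • z₂‖ := norm_add_le _ _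
  have heq : ‖lam • z₁ + (1 - lam) • z₂‖ = ‖lam • z₁‖ + ‖(1 - lam) • z₂‖ := by
    linarith
  have hn1 : ‖z₁‖ = 1 := by
    have := norm_smul (lam) z₁
    rw [Real.norm_of_nonneg hlam.le] at this
    nlinarith [norm_nonneg z₂]
  have hn2 : ‖z₂‖ = 1 := by
    have := norm_smul (1 - lam) z₂
    rw [Real.norm_of_nonneg hμ.le] at this
    nlinarith [norm_nonneg z₁]
  have hray : SameRay ℝ (lam • z₁) ((1 - lam) • z₂) := sameRay_iff_norm_add.mpr heq
  have hz₁0 : z₁ ≠ 0 := by intro h; rw [h, norm_zero] at hn1; norm_num at hn1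
  have hz₂0 : z₂ ≠ 0 := by intro h; rw [h, norm_zero] at hn2; norm_num at hn2
  have hray' : SameRay ℝ z₁ z₂ := by
    have hA : (lam • z₁ : ℂ) ≠ 0 := smul_ne_zero (ne_of_gt hlam) hz₁0
    have hB : ((1 - lam) • z₂ : ℂ) ≠ 0 := smul_ne_zero (ne_of_gt hμ) hz₂0
    have s1 : SameRay ℝ z₁ (lam • z₁) := SameRay.sameRay_pos_smul_right z₁ hlam
    have s2 : SameRay ℝ ((1 - lam) • z₂) z₂ := SameRay.sameRay_pos_smul_left z₂ hμ
    exact (s1.trans hray (fun h => absurd h hA)).trans s2 (fun h => absurd h hB)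
  have hz : z₁ = z₂ := hray'.eq_of_norm_eq (hn1.trans hn2.symm)
  have hc : c n m = z₁ := by
    rw [hcnm, hz, ← add_smul]
    simp
  exact ⟨hc, hc.trans hz⟩
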